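/- Let τ : (ℕ≥1 → ℂ) → ℂ be a nowhere-vanishing function. Then τ satisfies the three-term equation (for all x and all α₁, α₂, α₃, α₄ ∈ ℂ) if and only if for every integer m ≥ 2, every x : ℕ≥1 → ℂ, all pairwise distinct α₁, …, α_{m+1} ∈ ℂ and all pairwise distinct β₁, …, β_{m−1} ∈ ℂ with βᵢ ≠ αⱼ for all i, j, the addition formula of order m holds at x. (This is the algebraic content of Theorem 1: the family of addition formulae is equivalent to the KP hierarchy, so the three-term equation is equivalent to the KP hierarchy.) -/

import Mathlib

open scoped BigOperators

noncomputable section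

/-- Sequences `x = (x₁, x₂, …)` indexed by positive integers, with complex entries. -/
abbrev TSeq : Type := {n : ℕ // 0 < n} → ℂ

/-- `[α]`, the sequence whose `n`-th entry is `αⁿ/n`. -/
noncomputable def ch (α : ℂ) : TSeq := fun n => α ^ (n : ℕ) / ((n : ℕ) : ℂ)

/-- The Vandermonde-type product `Δ(γ₁, …, γₙ) = ∏_{i<j} (γᵢ - γⱼ)`. -/
noncomputable def Vand {n : ℕ} (γ : Fin n → ℂ) : ℂ :=
  ∏ i, ∏ j ∈ Finset.Ioi i, (γ i - γ j)

/-- `ζ(x; γ₁, …, γₙ) = Δ(γ₁, …, γₙ) · τ(x + [γ₁] + ⋯ + [γₙ])`. -/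
noncomputable def zeta (τ : TSeq → ℂ) (x : TSeq) {n : ℕ} (γ : Fin n → ℂ) : ℂ :=
  Vand γ * τ (x + ∑ i, ch (γ i))

/-- The three-term equation of the KP hierarchy. -/
def ThreeTerm (τ : TSeq → ℂ) : Prop :=
  ∀ (x : TSeq) (α₁ α₂ α₃ α₄ : ℂ),
    (α₁ - α₂) * (α₃ - α₄) * τ (x + ch α₁ + ch α₂) * τ (x + ch α₃ + ch α₄)
    - (α₁ - α₃) * (α₂ - α₄) * τ (x + ch α₁ + ch α₃) * τ (x + ch α₂ + ch α₄)
    + (α₁ - α₄) * (α₂ - α₃) * τ (x + ch α₁ + ch α₄) * τ (x + ch α₂ + ch α₃) = 0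

/-- The addition formula of order `m` of the KP hierarchy, with parameters
`α₁, …, α_{m+1}` and `β₁, …, β_{m-1}`, at the point `x`:
`∑_{i=1}^{m+1} (−1)^{i−1} ζ(x; β₁,…,β_{m−1},αᵢ) ζ(x; α₁,…,α̂ᵢ,…,α_{m+1}) = 0`. -/
def KPAdd (τ : TSeq → ℂ) (m : ℕ) (x : TSeq) (α : Fin (m+1) → ℂ) (β : Fin (m-1) → ℂ) : Prop :=
  ∑ i : Fin (m+1), (-1 : ℂ) ^ (i : ℕ) * zeta τ x (Fin.snoc β (α i)) *
    zeta τ x (fun j : Fin m => α (i.succAbove j)) = 0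

section Aux
open Finset Function Matrix

section VandLemmas

open Finset Function

lemma Vand_nil (γ : Fin 0 → ℂ) : Vand γ = 1 := by simp [Vand]

lemma Vand_cons {n : ℕ} (a : ℂ) (γ : Fin n → ℂ) :
    Vand (Fin.cons a γ) = (∏ i, (a - γ i)) * Vand γ := by
  unfold Vand
  rw [Fin.prod_univ_succ]
  congr 1
  · rw [Fin.prod_Ioi_zero]
    exact Finset.prod_congr rfl (by simp)
  · refine Finset.prod_congr rfl fun i _ => ?_
    rw [Fin.prod_Ioi_succ]
    exact Finset.prod_congr rfl (by simp)

lemma ch_sum_cons {n : ℕ} (a : ℂ) (γ : Fin n → ℂ) :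
    ∑ i, ch ((Fin.cons a γ : Fin (n+1) → ℂ) i) = ch a + ∑ i, ch (γ i) := by
  rw [Fin.sum_univ_succ]
  simp

lemma zeta_cons (τ : TSeq → ℂ) (x : TSeq) {n : ℕ} (a : ℂ) (γ : Fin n → ℂ) :
    zeta τ x (Fin.cons a γ) = (∏ i, (a - γ i)) * zeta τ (x + ch a) γ := by
  unfold zeta
  rw [Vand_cons, ch_sum_cons, ← add_assoc]
  ring

lemma Vand_ne_zero {n : ℕ} {γ : Fin n → ℂ} (h : Function.Injective γ) : Vand γ ≠ 0 := by
  unfold Vand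
  rw [Finset.prod_ne_zero_iff]
  intro i _
  rw [Finset.prod_ne_zero_iff]
  intro j hj
  have : i ≠ j := (Finset.mem_Ioi.mp hj).ne
  exact sub_ne_zero.mpr (fun hc => this (h hc))

lemma zeta_ne_zero {τ : TSeq → ℂ} (hτ : ∀ y, τ y ≠ 0) (x : TSeq) {n : ℕ} {γ : Fin n → ℂ}
    (h : Function.Injective γ) : zeta τ x γ ≠ 0 :=
  mul_ne_zero (Vand_ne_zero h) (hτ _)

lemma Vand_eq_det {n : ℕ} (γ : Fin n → ℂ) :
    Vand γ = (-1 : ℂ) ^ (∑ i : Fin n, (Finset.Ioi i).card) * (Matrix.vandermonde γ).det := by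
  rw [Matrix.det_vandermonde, Vand, ← Finset.prod_pow_eq_pow_sum, ← Finset.prod_mul_distrib]
  refine Finset.prod_congr rfl fun i _ => ?_
  rw [← Finset.prod_const, ← Finset.prod_mul_distrib]
  exact Finset.prod_congr rfl fun j _ => by ring

lemma Vand_perm {n : ℕ} (γ : Fin n → ℂ) (σ : Equiv.Perm (Fin n)) :
    Vand (γ ∘ σ) = ((Equiv.Perm.sign σ : ℤ) : ℂ) * Vand γ := by
  have h : Matrix.vandermonde (γ ∘ σ) = (Matrix.vandermonde γ).submatrix σ id := by
    ext i j; simp [Matrix.vandermonde]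
  rw [Vand_eq_det, Vand_eq_det, h, Matrix.det_permute]
  push_cast
  ring

lemma zeta_perm (τ : TSeq → ℂ) (x : TSeq) {n : ℕ} (γ : Fin n → ℂ) (σ : Equiv.Perm (Fin n)) :
    zeta τ x (γ ∘ σ) = ((Equiv.Perm.sign σ : ℤ) : ℂ) * zeta τ x γ := by
  unfold zeta
  rw [Vand_perm]
  have h : ∑ i, ch ((γ ∘ σ) i) = ∑ i, ch (γ i) :=
    Fintype.sum_bijective σ σ.bijective _ _ (fun i => rfl)
  rw [h]
  ring

lemma zeta_exchange {τ : TSeq → ℂ} (h3 : ThreeTerm τ) (x : TSeq) {n : ℕ}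
    (δ : Fin n → ℂ) (s t c d : ℂ) :
    zeta τ x (Fin.cons s (Fin.cons t δ)) * zeta τ x (Fin.cons c (Fin.cons d δ))
    - zeta τ x (Fin.cons s (Fin.cons c δ)) * zeta τ x (Fin.cons t (Fin.cons d δ))
    + zeta τ x (Fin.cons s (Fin.cons d δ)) * zeta τ x (Fin.cons t (Fin.cons c δ)) = 0 := by
  set y := x + ∑ i, ch (δ i) with hy
  have key : ∀ a b : ℂ, zeta τ x (Fin.cons a (Fin.cons b δ)) =
      (a - b) * (∏ i, (a - δ i)) * (∏ i, (b - δ i)) * Vand δ * τ (y + ch a + ch b) := by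
    intro a b
    rw [zeta_cons, zeta_cons]
    have h1 : (∏ i, (a - (Fin.cons b δ : Fin (n+1) → ℂ) i)) = (a - b) * ∏ i, (a - δ i) := by
      rw [Fin.prod_univ_succ]; simp
    have h2 : x + ch a + ch b + ∑ i, ch (δ i) = y + ch a + ch b := by
      rw [hy]; abel
    unfold zeta
    rw [h1, h2]
    ring
  rw [key, key, key, key, key, key]
  have := h3 y s t c d
  linear_combination ((Vand δ)^2 * (∏ i, (s - δ i)) * (∏ i, (t - δ i)) * (∏ i, (c - δ i)) *
    (∏ i, (d - δ i))) * this

end VandLemmas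


lemma det_updateRow_lin {N : ℕ} (A : Matrix (Fin N) (Fin N) ℂ) (j : Fin N) {ι : Type*}
    (s : Finset ι) (c : ι → ℂ) (f : ι → Fin N → ℂ) :
    (A.updateRow j (∑ i ∈ s, c i • f i)).det = ∑ i ∈ s, c i * (A.updateRow j (f i)).det := by
  classical
  induction s using Finset.induction_on with
  | empty =>
      simp only [Finset.sum_empty]
      exact Matrix.det_eq_zero_of_row_eq_zero j (fun k => by simp)
  | @insert a s ha ih =>
      rw [Finset.sum_insert ha, Matrix.det_updateRow_add, Matrix.det_updateRow_smul, ih,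
        Finset.sum_insert ha]

lemma det_single_update {N : ℕ} (M : Matrix (Fin N) (Fin N) ℂ) (hM : IsUnit M.det)
    (j : Fin N) (p : Fin N → ℂ) :
    (M.updateRow j p).det = (p ᵥ* M⁻¹) j * M.det := by
  classical
  have hp : p = ∑ k, (p ᵥ* M⁻¹) k • M k := by
    have h1 : (p ᵥ* M⁻¹) ᵥ* M = p := by
      rw [Matrix.vecMul_vecMul, Matrix.nonsing_inv_mul M hM, Matrix.vecMul_one]
    have h2 : (∑ k, (p ᵥ* M⁻¹) k • M k) = (p ᵥ* M⁻¹) ᵥ* M := by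
      funext r
      simp [Matrix.vecMul, dotProduct, Finset.sum_apply, Finset.sum_mul]
    rw [h2, h1]
  conv_lhs => rw [hp]
  rw [det_updateRow_lin M j Finset.univ (p ᵥ* M⁻¹) M]
  rw [Finset.sum_eq_single j]
  · rw [Matrix.updateRow_eq_self]
  · intro k _ hk
    have : (M.updateRow j (M k)).det = 0 :=
      Matrix.det_zero_of_row_eq hk.symm (by simp [Matrix.updateRow_self, Matrix.updateRow_ne hk])
    rw [this, mul_zero]
  · intro h; exact absurd (Finset.mem_univ j) h

lemma det_two_update {n : ℕ} (M : Matrix (Fin (n+2)) (Fin (n+2)) ℂ) (hM : IsUnit M.det)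
    (p q : Fin (n+2) → ℂ) :
    ((M.updateRow 0 p).updateRow 1 q).det
      = M.det * ((p ᵥ* M⁻¹) 0 * (q ᵥ* M⁻¹) 1 - (p ᵥ* M⁻¹) 1 * (q ᵥ* M⁻¹) 0) := by
  classical
  have hq : q = ∑ k, (q ᵥ* M⁻¹) k • M k := by
    have h1 : (q ᵥ* M⁻¹) ᵥ* M = q := by
      rw [Matrix.vecMul_vecMul, Matrix.nonsing_inv_mul M hM, Matrix.vecMul_one]
    have h2 : (∑ k, (q ᵥ* M⁻¹) k • M k) = (q ᵥ* M⁻¹) ᵥ* M := by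
      funext r
      simp [Matrix.vecMul, dotProduct, Finset.sum_apply, Finset.sum_mul]
    rw [h2, h1]
  conv_lhs => rw [hq]
  rw [det_updateRow_lin (M.updateRow 0 p) 1 Finset.univ (q ᵥ* M⁻¹) M]
  have h01 : (0 : Fin (n+2)) ≠ (1 : Fin (n+2)) := by simp [Fin.ext_iff]
  have e1 : ((M.updateRow 0 p).updateRow 1 (M 1)).det = (p ᵥ* M⁻¹) 0 * M.det := by
    have : (M.updateRow 0 p) 1 = M 1 := Matrix.updateRow_ne h01.symm
    rw [← this, Matrix.updateRow_eq_self]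
    exact det_single_update M hM 0 p
  have e0 : ((M.updateRow 0 p).updateRow 1 (M 0)).det = -((p ᵥ* M⁻¹) 1 * M.det) := by
    have hswap : (M.updateRow 0 p).updateRow 1 (M 0)
        = (M.updateRow 1 p).submatrix (Equiv.swap 0 1) id := by
      ext i k
      rcases eq_or_ne i 0 with rfl | hi0
      · simp [Matrix.submatrix_apply, Equiv.swap_apply_left, Matrix.updateRow_ne h01,
          Matrix.updateRow_self]
      rcases eq_or_ne i 1 with rfl | hi1
      · simp [Matrix.submatrix_apply, Equiv.swap_apply_right, Matrix.updateRow_self,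
          Matrix.updateRow_ne h01.symm]
      · simp [Matrix.submatrix_apply, Equiv.swap_apply_of_ne_of_ne hi0 hi1,
          Matrix.updateRow_ne hi0, Matrix.updateRow_ne hi1]
    rw [hswap, Matrix.det_permute, Equiv.Perm.sign_swap h01,
      det_single_update M hM 1 p]
    push_cast
    ring
  have eother : ∀ k : Fin n,
      ((M.updateRow 0 p).updateRow 1 (M k.succ.succ)).det = 0 := by
    intro k
    have hne : (1 : Fin (n+2)) ≠ k.succ.succ := by
      simp [Fin.ext_iff]
    refine Matrix.det_zero_of_row_eq hne ?_
    have h2 : k.succ.succ ≠ (1 : Fin (n+2)) := hne.symm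
    have h0 : k.succ.succ ≠ (0 : Fin (n+2)) := by simp [Fin.ext_iff]
    rw [Matrix.updateRow_self, Matrix.updateRow_ne h2, Matrix.updateRow_ne h0]
  rw [Fin.sum_univ_succ, Fin.sum_univ_succ]
  have hz : ∀ k : Fin n, (q ᵥ* M⁻¹) k.succ.succ *
      ((M.updateRow 0 p).updateRow 1 (M k.succ.succ)).det = 0 := by
    intro k; rw [eother, mul_zero]
  rw [Finset.sum_congr rfl (fun k _ => hz k), Finset.sum_const, smul_zero]
  show (q ᵥ* M⁻¹) 0 * ((M.updateRow 0 p).updateRow 1 (M 0)).det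
      + ((q ᵥ* M⁻¹) 1 * ((M.updateRow 0 p).updateRow 1 (M 1)).det + 0) = _
  rw [e0, e1]
  ring

-- det Plücker 3-term, conditional version
lemma det_plucker_cond {n : ℕ} (W : Fin n → (Fin (n+2) → ℂ)) (p1 p2 p3 p4 : Fin (n+2) → ℂ)
    (hcd : (Matrix.of (Fin.cons p3 (Fin.cons p4 W))).det ≠ 0) :
    (Matrix.of (Fin.cons p1 (Fin.cons p2 W))).det * (Matrix.of (Fin.cons p3 (Fin.cons p4 W))).det
    - (Matrix.of (Fin.cons p1 (Fin.cons p3 W))).det * (Matrix.of (Fin.cons p2 (Fin.cons p4 W))).det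
    + (Matrix.of (Fin.cons p1 (Fin.cons p4 W))).det * (Matrix.of (Fin.cons p2 (Fin.cons p3 W))).det
    = 0 := by
  classical
  have hM : IsUnit (Matrix.of (Fin.cons p3 (Fin.cons p4 W))).det := isUnit_iff_ne_zero.mpr hcd
  set M : Matrix (Fin (n+2)) (Fin (n+2)) ℂ := Matrix.of (Fin.cons p3 (Fin.cons p4 W)) with hMdef
  have h01 : (0 : Fin (n+2)) ≠ (1 : Fin (n+2)) := by simp [Fin.ext_iff]
  have key : ∀ a b : Fin (n+2) → ℂ,
      (Matrix.of (Fin.cons a (Fin.cons b W))).det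
        = M.det * ((a ᵥ* M⁻¹) 0 * (b ᵥ* M⁻¹) 1 - (a ᵥ* M⁻¹) 1 * (b ᵥ* M⁻¹) 0) := by
    intro a b
    have hmat : Matrix.of (Fin.cons a (Fin.cons b W)) = (M.updateRow 0 a).updateRow 1 b := by
      ext i k
      refine Fin.cases ?_ (fun i' => ?_) i
      · rw [Matrix.updateRow_ne h01, Matrix.updateRow_self]
        rfl
      · refine Fin.cases ?_ (fun i'' => ?_) i'
        · rw [show (Fin.succ 0 : Fin (n+2)) = 1 from rfl, Matrix.updateRow_self]
          rfl
        · have h1 : (i''.succ.succ : Fin (n+2)) ≠ 1 := by simp [Fin.ext_iff]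
          have h0 : (i''.succ.succ : Fin (n+2)) ≠ 0 := by simp [Fin.ext_iff]
          rw [Matrix.updateRow_ne h1, Matrix.updateRow_ne h0]
          rfl
    rw [hmat, det_two_update M hM a b]
  -- coordinates of p3 and p4
  have hrow : ∀ (v : Fin (n+2) → ℂ) (i : Fin (n+2)), M i = v → ∀ j, (v ᵥ* M⁻¹) j = (1 : Matrix (Fin (n+2)) (Fin (n+2)) ℂ) i j := by
    intro v i hv j
    have : (M * M⁻¹) i j = (v ᵥ* M⁻¹) j := by
      rw [← hv]
      simp [Matrix.mul_apply, Matrix.vecMul, dotProduct]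
    rw [← this, Matrix.mul_nonsing_inv M hM]
  have h3 : ∀ j, (p3 ᵥ* M⁻¹) j = (1 : Matrix (Fin (n+2)) (Fin (n+2)) ℂ) 0 j :=
    hrow p3 0 rfl
  have h4 : ∀ j, (p4 ᵥ* M⁻¹) j = (1 : Matrix (Fin (n+2)) (Fin (n+2)) ℂ) 1 j :=
    hrow p4 1 rfl
  have h30 : (p3 ᵥ* M⁻¹) 0 = 1 := by rw [h3]; simp
  have h31 : (p3 ᵥ* M⁻¹) 1 = 0 := by rw [h3]; simp [Matrix.one_apply, h01]
  have h40 : (p4 ᵥ* M⁻¹) 0 = 0 := by rw [h4]; simp [Matrix.one_apply, h01.symm]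
  have h41 : (p4 ᵥ* M⁻¹) 1 = 1 := by rw [h4]; simp
  have e12 := key p1 p2
  have e13 := key p1 p3
  have e14 := key p1 p4
  have e23 := key p2 p3
  have e24 := key p2 p4
  rw [e12, e13, e14, e23, e24, h30, h31, h40, h41]
  ring

-- the Cramer-style alternating identity (Lemma A)
lemma lemA {n : ℕ} (B : Fin n → (Fin (n+1) → ℂ)) (V : Fin (n+2) → (Fin (n+1) → ℂ)) :
    ∑ i : Fin (n+2), (-1 : ℂ) ^ (i : ℕ)
      * (Matrix.of (Fin.snoc B (V i))).det
      * (Matrix.of (fun a : Fin (n+1) => V (i.succAbove a))).det = 0 := by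
  classical
  have h1 : ∀ r : Fin (n+1), ∑ i : Fin (n+2), (-1 : ℂ) ^ (i : ℕ) * V i r *
      (Matrix.of (fun a : Fin (n+1) => V (i.succAbove a))).det = 0 := by
    intro r
    set C : Matrix (Fin (n+2)) (Fin (n+2)) ℂ :=
      Matrix.of (fun i (j : Fin (n+2)) => Fin.cases (V i r) (fun j' => V i j') j) with hC
    have hdet0 : C.det = 0 := by
      refine Matrix.det_zero_of_column_eq (show (0 : Fin (n+2)) ≠ r.succ
        from (Fin.succ_ne_zero r).symm) (fun k => ?_)
      simp [hC]
    have hexp := Matrix.det_succ_column_zero C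
    rw [hdet0] at hexp
    have hsub : ∀ i : Fin (n+2), (C.submatrix i.succAbove Fin.succ)
        = Matrix.of (fun a : Fin (n+1) => V (i.succAbove a)) := by
      intro i
      ext a b
      simp [hC, Matrix.submatrix_apply]
    have h2 : ∑ i : Fin (n+2), (-1 : ℂ) ^ (i : ℕ) * C i 0 * (C.submatrix i.succAbove Fin.succ).det
        = 0 := hexp.symm
    rw [Finset.sum_congr rfl (fun i _ => by rw [hsub i])] at h2
    have hC0 : ∀ i, C i 0 = V i r := fun i => rfl
    simpa [hC0] using h2
  set c : Fin (n+2) → ℂ :=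
    fun i => (-1 : ℂ) ^ (i : ℕ) * (Matrix.of (fun a : Fin (n+1) => V (i.succAbove a))).det with hc
  have hw : (∑ i, c i • V i) = 0 := by
    funext r
    simp only [Finset.sum_apply, Pi.smul_apply, Pi.zero_apply, smul_eq_mul]
    rw [← h1 r]
    exact Finset.sum_congr rfl fun i _ => by rw [hc]; ring
  set A0 : Matrix (Fin (n+1)) (Fin (n+1)) ℂ := Matrix.of (Fin.snoc B (0 : Fin (n+1) → ℂ))
    with hA0
  have hrow : ∀ z : Fin (n+1) → ℂ, Matrix.of (Fin.snoc B z) = A0.updateRow (Fin.last n) z := by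
    intro z
    ext i j
    refine Fin.lastCases ?_ (fun i' => ?_) i
    · simp [Matrix.updateRow_self]
    · rw [Matrix.updateRow_ne (Fin.castSucc_lt_last i').ne]
      simp [hA0]
  calc ∑ i : Fin (n+2), (-1 : ℂ) ^ (i : ℕ) * (Matrix.of (Fin.snoc B (V i))).det
        * (Matrix.of (fun a : Fin (n+1) => V (i.succAbove a))).det
      = ∑ i : Fin (n+2), c i * (A0.updateRow (Fin.last n) (V i)).det := by
        refine Finset.sum_congr rfl fun i _ => ?_
        rw [hrow (V i), hc]
        ring
    _ = (A0.updateRow (Fin.last n) (∑ i, c i • V i)).det := (det_updateRow_lin A0 _ _ _ _).symm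
    _ = 0 := by
      rw [hw]
      exact Matrix.det_eq_zero_of_row_eq_zero (Fin.last n) (fun k => by simp)



open scoped Classical in
/-- number of entries of `γ` avoiding all reference values `R`. -/
def muR {N K : ℕ} (R : Fin N → ℂ) (γ : Fin K → ℂ) : ℕ :=
  ∑ i, if (∀ j, γ i ≠ R j) then 1 else 0

open scoped Classical

lemma muR_perm {N K : ℕ} (R : Fin N → ℂ) (γ : Fin K → ℂ) (σ : Equiv.Perm (Fin K)) :
    muR R (γ ∘ σ) = muR R γ :=
  Fintype.sum_bijective σ σ.bijective _ _ (fun i => rfl)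

lemma muR_cons {N K : ℕ} (R : Fin N → ℂ) (a : ℂ) (γ : Fin K → ℂ) :
    muR R (Fin.cons a γ) = (if (∀ j, a ≠ R j) then 1 else 0) + muR R γ := by
  unfold muR
  rw [Fin.sum_univ_succ]
  simp

lemma fin_cons_decomp {n : ℕ} (g : Fin (n+2) → ℂ) :
    g = Fin.cons (g 0) (Fin.cons (g 1) (fun j : Fin n => g j.succ.succ)) := by
  funext i
  refine Fin.cases rfl (fun i' => ?_) i
  rw [Fin.cons_succ]
  refine Fin.cases rfl (fun i'' => ?_) i'
  rw [Fin.cons_succ]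

lemma exists_perm01 {n : ℕ} (i₁ i₂ : Fin (n+2)) (h : i₁ ≠ i₂) :
    ∃ σ : Equiv.Perm (Fin (n+2)), σ 0 = i₁ ∧ σ 1 = i₂ := by
  refine ⟨Equiv.swap 0 i₁ * Equiv.swap 1 ((Equiv.swap 0 i₁) i₂), ?_, ?_⟩
  · have h10 : (0 : Fin (n+2)) ≠ (1 : Fin (n+2)) := by simp [Fin.ext_iff]
    have hj : (Equiv.swap 0 i₁) i₂ ≠ 0 := by
      intro hc
      apply h
      have := congrArg (Equiv.swap 0 i₁) hc
      rw [Equiv.swap_apply_self, Equiv.swap_apply_left] at this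
      exact this.symm
    rw [Equiv.Perm.mul_apply, Equiv.swap_apply_of_ne_of_ne h10 (Ne.symm hj),
      Equiv.swap_apply_left]
  · rw [Equiv.Perm.mul_apply, Equiv.swap_apply_left, Equiv.swap_apply_self]

lemma cons_inj {n : ℕ} {δ : Fin n → ℂ} {a : ℂ} (h1 : Function.Injective δ)
    (h2 : ∀ i, δ i ≠ a) : Function.Injective (Fin.cons a δ : Fin (n+1) → ℂ) := by
  intro i j hij
  rcases Fin.eq_zero_or_eq_succ i with rfl | ⟨i', rfl⟩ <;>
    rcases Fin.eq_zero_or_eq_succ j with rfl | ⟨j', rfl⟩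
  · rfl
  · rw [Fin.cons_zero, Fin.cons_succ] at hij
    exact absurd hij.symm (h2 j')
  · rw [Fin.cons_zero, Fin.cons_succ] at hij
    exact absurd hij (h2 i')
  · rw [Fin.cons_succ, Fin.cons_succ] at hij
    rw [h1 hij]

lemma alt_zero_of_repeat {N : ℕ} {H : (Fin N → ℂ) → ℂ}
    (halt : ∀ (γ : Fin N → ℂ) (σ : Equiv.Perm (Fin N)),
      H (γ ∘ σ) = ((Equiv.Perm.sign σ : ℤ) : ℂ) * H γ)
    {γ : Fin N → ℂ} (h : ¬ Function.Injective γ) : H γ = 0 := by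
  obtain ⟨i, j, hval, hij⟩ := Function.not_injective_iff.mp h
  have hfix : γ ∘ (Equiv.swap i j) = γ := by
    funext k
    simp only [Function.comp_apply, Equiv.swap_apply_def]
    split_ifs with h1 h2
    · rw [h1, hval]
    · rw [h2, ← hval]
    · rfl
  have h2 := halt γ (Equiv.swap i j)
  rw [hfix, Equiv.Perm.sign_swap hij] at h2
  push_cast at h2
  linear_combination h2 / 2

lemma exists_unused {n : ℕ} (R : Fin (n+2) → ℂ) (hR : Function.Injective R)
    (γ : Fin (n+2) → ℂ) (h2 : 2 ≤ muR R γ) : ∃ j, ∀ i, γ i ≠ R j := by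
  by_contra hc
  push_neg at hc
  choose ψ hψ using hc
  have hψinj : Function.Injective ψ := by
    intro j j' h
    apply hR
    rw [← hψ j, ← hψ j', h]
  have hψsurj : Function.Surjective ψ := Finite.injective_iff_surjective.mp hψinj
  have : muR R γ = 0 := by
    apply Finset.sum_eq_zero
    intro i _
    rw [if_neg]
    intro hall
    obtain ⟨j, hj⟩ := hψsurj i
    exact hall j (by rw [← hj, hψ j])
  omega

lemma exists_unused2 {n : ℕ} (R : Fin (n+2) → ℂ) (hR : Function.Injective R)
    (δ : Fin n → ℂ) (j₁ : Fin (n+2)) : ∃ j₂, j₂ ≠ j₁ ∧ ∀ i, δ i ≠ R j₂ := by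
  by_contra hc
  push_neg at hc
  -- hc : ∀ j₂, j₂ ≠ j₁ → ∃ i, δ i = R j₂
  cases n with
  | zero =>
      obtain ⟨j', hj'⟩ := exists_ne j₁
      obtain ⟨i, _⟩ := hc j' hj'
      exact i.elim0
  | succ m =>
      set f : Fin (m+3) → Fin (m+1) := fun j =>
        if h : j ≠ j₁ then Classical.choose (hc j h) else 0 with hf
      have hmaps : ∀ j ∈ Finset.univ.erase j₁, f j ∈ (Finset.univ : Finset (Fin (m+1))) :=
        fun j _ => Finset.mem_univ _
      have hcard : (Finset.univ : Finset (Fin (m+1))).card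
          < (Finset.univ.erase j₁ : Finset (Fin (m+3))).card := by
        rw [Finset.card_erase_of_mem (Finset.mem_univ _)]
        simp
      obtain ⟨j, hj, j', hj', hne, heq⟩ :=
        Finset.exists_ne_map_eq_of_card_lt_of_maps_to hcard hmaps
      have hjne : j ≠ j₁ := (Finset.mem_erase.mp hj).1
      have hj'ne : j' ≠ j₁ := (Finset.mem_erase.mp hj').1
      have hv : δ (f j) = R j := by
        rw [hf]; simp only [dif_pos hjne]; exact (Classical.choose_spec (hc j hjne))
      have hv' : δ (f j') = R j' := by
        rw [hf]; simp only [dif_pos hj'ne]; exact (Classical.choose_spec (hc j' hj'ne))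
      apply hne
      apply hR
      rw [← hv, ← hv', heq]

lemma base_decomp {n : ℕ} (R : Fin (n+2) → ℂ) (hR : Function.Injective R)
    (γ : Fin (n+2) → ℂ) (hinj : Function.Injective γ) (hmu : muR R γ ≤ 1) :
    ∃ (σ : Equiv.Perm (Fin (n+2))) (j₀ : Fin (n+2)) (a : ℂ),
      γ = (Function.update R j₀ a) ∘ σ := by
  by_cases hex : ∃ i, ∀ j, γ i ≠ R j
  · obtain ⟨i₀, hi₀⟩ := hex
    have hvals : ∀ i, i ≠ i₀ → ∃ j, γ i = R j := by
      intro i hi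
      by_contra hcon
      push_neg at hcon
      have h2 : 2 ≤ muR R γ := by
        have hle : ({i, i₀} : Finset (Fin (n+2))).sum
            (fun i => if (∀ j, γ i ≠ R j) then 1 else 0) ≤ muR R γ :=
          Finset.sum_le_sum_of_subset (Finset.subset_univ _)
        rwa [Finset.sum_pair hi, if_pos hcon, if_pos hi₀] at hle
      omega
    have hspec : ∀ i (h : i ≠ i₀), γ i = R (Classical.choose (hvals i h)) :=
      fun i h => Classical.choose_spec (hvals i h)
    set T : Finset (Fin (n+2)) := (Finset.univ.erase i₀).image
      (fun i => if h : i ≠ i₀ then Classical.choose (hvals i h) else i₀) with hT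
    have hTcard : T.card ≤ n + 1 := by
      refine le_trans Finset.card_image_le ?_
      rw [Finset.card_erase_of_mem (Finset.mem_univ _)]
      simp
    have hTne : ∃ j₀, j₀ ∉ T := by
      by_contra hcon
      push_neg at hcon
      have := Finset.eq_univ_iff_forall.mpr hcon
      have hcard := congrArg Finset.card this
      rw [Finset.card_univ] at hcard
      simp at hcard
      omega
    obtain ⟨j₀, hj₀⟩ := hTne
    set φ : Fin (n+2) → Fin (n+2) :=
      fun i => if h : i ≠ i₀ then Classical.choose (hvals i h) else j₀ with hφ
    have hφval : ∀ i (h : i ≠ i₀), γ i = R (φ i) := by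
      intro i h
      rw [hφ]; simp only [dif_pos h]; exact hspec i h
    have hφi₀ : φ i₀ = j₀ := by rw [hφ]; simp
    have hφne : ∀ i, i ≠ i₀ → φ i ≠ j₀ := by
      intro i h hcon
      apply hj₀
      rw [← hcon, hT]
      refine Finset.mem_image.mpr ⟨i, Finset.mem_erase.mpr ⟨h, Finset.mem_univ _⟩, ?_⟩
      simp only [hφ, dif_pos h]
    have hφinj : Function.Injective φ := by
      intro i i' he
      by_cases h1 : i = i₀ <;> by_cases h2 : i' = i₀
      · rw [h1, h2]
      · exact absurd (by rw [← he, h1, hφi₀]) (Ne.symm (hφne i' h2))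
      · exact absurd (by rw [he, h2, hφi₀]) (Ne.symm (hφne i h1))
      · exact hinj (by rw [hφval i h1, hφval i' h2, he])
    refine ⟨Equiv.ofBijective φ (Finite.injective_iff_bijective.mp hφinj), j₀, γ i₀,
      funext fun i => ?_⟩
    show γ i = Function.update R j₀ (γ i₀) (φ i)
    by_cases h : i = i₀
    · rw [h, hφi₀, Function.update_self]
    · rw [Function.update_of_ne (hφne i h), ← hφval i h]
  · push_neg at hex
    choose ι hι using hex
    have hιinj : Function.Injective ι := by
      intro i i' h
      apply hinj
      rw [hι, hι, h]
    refine ⟨Equiv.ofBijective ι (Finite.injective_iff_bijective.mp hιinj), 0, R 0,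
      funext fun i => ?_⟩
    show γ i = Function.update R 0 (R 0) (ι i)
    rw [Function.update_eq_self, ← hι]

lemma jointE {n : ℕ} (R : Fin (n+2) → ℂ) (hR : Function.Injective R)
    (F G : (Fin (n+2) → ℂ) → ℂ)
    (hFalt : ∀ (γ : Fin (n+2) → ℂ) (σ : Equiv.Perm (Fin (n+2))),
      F (γ ∘ σ) = ((Equiv.Perm.sign σ : ℤ) : ℂ) * F γ)
    (hGalt : ∀ (γ : Fin (n+2) → ℂ) (σ : Equiv.Perm (Fin (n+2))),
      G (γ ∘ σ) = ((Equiv.Perm.sign σ : ℤ) : ℂ) * G γ)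
    (hFex : ∀ (δ : Fin n → ℂ) (s t c d : ℂ),
      F (Fin.cons s (Fin.cons t δ)) * F (Fin.cons c (Fin.cons d δ))
      - F (Fin.cons s (Fin.cons c δ)) * F (Fin.cons t (Fin.cons d δ))
      + F (Fin.cons s (Fin.cons d δ)) * F (Fin.cons t (Fin.cons c δ)) = 0)
    (hGex : ∀ (δ : Fin n → ℂ) (s t c d : ℂ), G (Fin.cons c (Fin.cons d δ)) ≠ 0 →
      G (Fin.cons s (Fin.cons t δ)) * G (Fin.cons c (Fin.cons d δ))
      - G (Fin.cons s (Fin.cons c δ)) * G (Fin.cons t (Fin.cons d δ))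
      + G (Fin.cons s (Fin.cons d δ)) * G (Fin.cons t (Fin.cons c δ)) = 0)
    (hFne : ∀ γ, Function.Injective γ → F γ ≠ 0)
    (hbase : ∀ (j : Fin (n+2)) (a : ℂ),
      F (Function.update R j a) = G (Function.update R j a)) :
    ∀ γ, F γ = G γ := by
  suffices main : ∀ (k : ℕ) (γ : Fin (n+2) → ℂ), muR R γ = k → F γ = G γ by
    intro γ; exact main _ γ rfl
  intro k
  induction k using Nat.strong_induction_on with
  | _ k IH =>
  intro γ hk
  by_cases hinj : Function.Injective γ
  swap
  · rw [alt_zero_of_repeat hFalt hinj, alt_zero_of_repeat hGalt hinj]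
  rcases le_or_gt k 1 with hk1 | hk2
  · obtain ⟨σ, j₀, a, hγ⟩ := base_decomp R hR γ hinj (by omega)
    rw [hγ, hFalt, hGalt, hbase]
  · -- recursive case
    have hfil : muR R γ = (Finset.univ.filter (fun i => ∀ j, γ i ≠ R j)).card :=
      (Finset.card_filter _ _).symm
    have h2le : 1 < (Finset.univ.filter (fun i => ∀ j, γ i ≠ R j)).card := by omega
    obtain ⟨i₁, hi₁m, i₂, hi₂m, hne⟩ := Finset.one_lt_card.mp h2le
    have hi₁ : ∀ j, γ i₁ ≠ R j := (Finset.mem_filter.mp hi₁m).2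
    have hi₂ : ∀ j, γ i₂ ≠ R j := (Finset.mem_filter.mp hi₂m).2
    obtain ⟨σ, hσ0, hσ1⟩ := exists_perm01 i₁ i₂ hne
    set δ : Fin n → ℂ := fun j => γ (σ (j.succ.succ)) with hδdef
    set s : ℂ := γ i₁ with hs
    set t : ℂ := γ i₂ with ht
    have hdecomp : γ ∘ σ = Fin.cons s (Fin.cons t δ) := by
      rw [fin_cons_decomp (γ ∘ σ)]
      have e0 : (γ ∘ σ) 0 = s := by rw [Function.comp_apply, hσ0]
      have e1 : (γ ∘ σ) 1 = t := by rw [Function.comp_apply, hσ1]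
      rw [e0, e1]
      rfl
    have hδinj : Function.Injective δ := by
      intro a b h
      have h2 : σ a.succ.succ = σ b.succ.succ := hinj h
      exact Fin.succ_injective _ (Fin.succ_injective _ (σ.injective h2))
    obtain ⟨j₁, hj₁⟩ := exists_unused R hR γ (by omega)
    obtain ⟨j₂, hj₂ne, hj₂⟩ := exists_unused2 R hR δ j₁
    set c : ℂ := R j₁ with hc
    set d : ℂ := R j₂ with hd
    -- measure bookkeeping
    have hoffs : (∀ j, s ≠ R j) := hi₁
    have hofft : (∀ j, t ≠ R j) := hi₂
    have hoffc : ¬ (∀ j, c ≠ R j) := fun h => h j₁ rfl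
    have hoffd : ¬ (∀ j, d ≠ R j) := fun h => h j₂ rfl
    have hmuσ : muR R (γ ∘ σ) = k := by rw [muR_perm, hk]
    have hmuδ : muR R δ + 2 = k := by
      rw [hdecomp, muR_cons, muR_cons, if_pos hoffs, if_pos hofft] at hmuσ
      omega
    have hmu2 : ∀ a b : ℂ, muR R (Fin.cons a (Fin.cons b δ))
        = (if (∀ j, a ≠ R j) then 1 else 0) + ((if (∀ j, b ≠ R j) then 1 else 0) + muR R δ) := by
      intro a b
      rw [muR_cons, muR_cons]
    -- IH applications
    have e2 : F (Fin.cons c (Fin.cons d δ)) = G (Fin.cons c (Fin.cons d δ)) := by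
      refine IH (k - 2) (by omega) _ ?_
      rw [hmu2, if_neg hoffc, if_neg hoffd]
      omega
    have e3 : F (Fin.cons s (Fin.cons c δ)) = G (Fin.cons s (Fin.cons c δ)) := by
      refine IH (k - 1) (by omega) _ ?_
      rw [hmu2, if_pos hoffs, if_neg hoffc]
      omega
    have e4 : F (Fin.cons t (Fin.cons d δ)) = G (Fin.cons t (Fin.cons d δ)) := by
      refine IH (k - 1) (by omega) _ ?_
      rw [hmu2, if_pos hofft, if_neg hoffd]
      omega
    have e5 : F (Fin.cons s (Fin.cons d δ)) = G (Fin.cons s (Fin.cons d δ)) := by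
      refine IH (k - 1) (by omega) _ ?_
      rw [hmu2, if_pos hoffs, if_neg hoffd]
      omega
    have e6 : F (Fin.cons t (Fin.cons c δ)) = G (Fin.cons t (Fin.cons c δ)) := by
      refine IH (k - 1) (by omega) _ ?_
      rw [hmu2, if_pos hofft, if_neg hoffc]
      omega
    -- nonvanishing of the pivot
    have hT2inj : Function.Injective (Fin.cons c (Fin.cons d δ) : Fin (n+2) → ℂ) := by
      have hdc : d ≠ c := fun hcon => hj₂ne (hR hcon)
      have hinner : Function.Injective (Fin.cons d δ : Fin (n+1) → ℂ) :=
        cons_inj hδinj (fun i => hj₂ i)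
      refine cons_inj hinner ?_
      intro i
      rcases Fin.eq_zero_or_eq_succ i with rfl | ⟨i', rfl⟩
      · rw [Fin.cons_zero]; exact hdc
      · rw [Fin.cons_succ]; exact hj₁ _
    have hF2 : F (Fin.cons c (Fin.cons d δ)) ≠ 0 := hFne _ hT2inj
    have hG2 : G (Fin.cons c (Fin.cons d δ)) ≠ 0 := by rw [← e2]; exact hF2
    have hex1 := hFex δ s t c d
    have hex2 := hGex δ s t c d hG2
    have hT1 : F (Fin.cons s (Fin.cons t δ)) = G (Fin.cons s (Fin.cons t δ)) := by
      have hzero : (F (Fin.cons s (Fin.cons t δ)) - G (Fin.cons s (Fin.cons t δ)))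
          * F (Fin.cons c (Fin.cons d δ)) = 0 := by
        linear_combination hex1 - hex2 + F (Fin.cons t (Fin.cons d δ)) * e3
          + G (Fin.cons s (Fin.cons c δ)) * e4
          - F (Fin.cons t (Fin.cons c δ)) * e5
          - G (Fin.cons s (Fin.cons d δ)) * e6
          - G (Fin.cons s (Fin.cons t δ)) * e2
      rcases mul_eq_zero.mp hzero with h | h
      · exact sub_eq_zero.mp h
      · exact absurd h hF2
    have hfin : γ = (Fin.cons s (Fin.cons t δ)) ∘ ⇑(σ⁻¹) := by
      funext i
      rw [Function.comp_apply, ← hdecomp, Function.comp_apply, Equiv.Perm.inv_def, Equiv.apply_symm_apply]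
    rw [hfin, hFalt, hGalt, hT1]


lemma zeta_rep {τ : TSeq → ℂ} (hτ : ∀ y, τ y ≠ 0) (h3 : ThreeTerm τ) (x : TSeq) (k : ℕ) :
    ∃ (v : ℂ → (Fin (k+2) → ℂ)) (N : ℂ), N ≠ 0 ∧
      ∀ γ : Fin (k+2) → ℂ,
        N ^ (k+1) * zeta τ x γ = (Matrix.of (fun i => v (γ i))).det := by
  classical
  set R : Fin (k+2) → ℂ := fun i => ((i : ℕ) : ℂ) with hRdef
  have hR : Function.Injective R := by
    intro i j h
    exact Fin.val_injective (Nat.cast_injective h)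
  set N : ℂ := zeta τ x R with hNdef
  have hN : N ≠ 0 := zeta_ne_zero hτ x hR
  set v : ℂ → (Fin (k+2) → ℂ) := fun a j => zeta τ x (Function.update R j a) with hv
  set F : (Fin (k+2) → ℂ) → ℂ := fun γ => N ^ (k+1) * zeta τ x γ with hF
  set G : (Fin (k+2) → ℂ) → ℂ := fun γ => (Matrix.of (fun i => v (γ i))).det with hG
  refine ⟨v, N, hN, ?_⟩
  refine jointE R hR F G ?_ ?_ ?_ ?_ ?_ ?_
  · intro γ σ
    simp only [hF]
    rw [zeta_perm]
    ring
  · intro γ σ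
    simp only [hG]
    have hmat : Matrix.of (fun i => v ((γ ∘ σ) i))
        = (Matrix.of (fun i => v (γ i))).submatrix σ id := rfl
    rw [hmat, Matrix.det_permute]
  · intro δ s t c d
    simp only [hF]
    linear_combination (N ^ (k+1)) ^ 2 * zeta_exchange h3 x δ s t c d
  · intro δ s t c d hne
    simp only [hG] at *
    have hcomp : ∀ (a b : ℂ), (fun i => v ((Fin.cons a (Fin.cons b δ) : Fin (k+2) → ℂ) i))
        = Fin.cons (v a) (Fin.cons (v b) (v ∘ δ)) := by
      intro a b
      rw [show (fun i => v ((Fin.cons a (Fin.cons b δ) : Fin (k+2) → ℂ) i))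
          = v ∘ (Fin.cons a (Fin.cons b δ)) from rfl, Fin.comp_cons, Fin.comp_cons]
    rw [hcomp, hcomp, hcomp, hcomp, hcomp, hcomp] at *
    exact det_plucker_cond (v ∘ δ) (v s) (v t) (v c) (v d) hne
  · intro γ hγ
    exact mul_ne_zero (pow_ne_zero _ hN) (zeta_ne_zero hτ x hγ)
  · intro j a
    simp only [hF, hG]
    have hvR : ∀ i : Fin (k+2), v (R i) = fun k' => if i = k' then N else 0 := by
      intro i
      funext k'
      by_cases h : k' = i
      · subst h
        rw [if_pos rfl]
        simp only [hv, Function.update_eq_self, hNdef]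
      · rw [if_neg (Ne.symm h)]
        simp only [hv]
        refine alt_zero_of_repeat (fun γ σ => zeta_perm τ x γ σ) ?_
        intro hI
        apply h
        apply hI
        rw [Function.update_self, Function.update_of_ne (Ne.symm h)]
    have hmat : Matrix.of (fun i => v (Function.update R j a i))
        = (N • (1 : Matrix (Fin (k+2)) (Fin (k+2)) ℂ)).updateRow j (v a) := by
      ext i k'
      by_cases h : i = j
      · subst h
        rw [Matrix.updateRow_self]
        simp only [Matrix.of_apply, Function.update_self]
      · rw [Matrix.updateRow_ne h]
        simp only [Matrix.of_apply, Function.update_of_ne h]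
        rw [hvR i]
        simp only [Matrix.smul_apply, Matrix.one_apply, smul_eq_mul]
        split_ifs <;> simp
    rw [hmat]
    have h1 : ((N • (1 : Matrix (Fin (k+2)) (Fin (k+2)) ℂ)).updateRow j (v a)).det
        = Matrix.cramer (N • (1 : Matrix (Fin (k+2)) (Fin (k+2)) ℂ))ᵀ (v a) j :=
      (Matrix.cramer_transpose_apply _ _ _).symm
    rw [h1, Matrix.transpose_smul, Matrix.transpose_one, Matrix.cramer_eq_adjugate_mulVec,
      Matrix.adjugate_smul, Matrix.adjugate_one, Matrix.smul_mulVec, Matrix.one_mulVec]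
    simp only [Pi.smul_apply, smul_eq_mul, Fintype.card_fin]
    rfl

-- ### Forward direction
theorem forward_thm {τ : TSeq → ℂ} (hτ : ∀ y, τ y ≠ 0) (h3 : ThreeTerm τ) :
    ∀ (m : ℕ), 2 ≤ m → ∀ (x : TSeq) (α : Fin (m+1) → ℂ) (β : Fin (m-1) → ℂ),
      KPAdd τ m x α β := by
  intro m hm x α β
  obtain ⟨k, rfl⟩ : ∃ k, m = k + 2 := ⟨m - 2, by omega⟩
  obtain ⟨v, N, hN, hrep⟩ := zeta_rep hτ h3 x k
  unfold KPAdd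
  have key := lemA (fun i : Fin (k+1) => v (β i)) (fun i : Fin (k+3) => v (α i))
  have h2 : ∀ i : Fin (k+3),
      (N ^ (k+1) * N ^ (k+1)) * ((-1 : ℂ) ^ (i : ℕ) * zeta τ x (Fin.snoc β (α i)) *
        zeta τ x (fun j : Fin (k+2) => α (i.succAbove j)))
      = (-1 : ℂ) ^ (i : ℕ)
        * (Matrix.of (Fin.snoc (fun i' : Fin (k+1) => v (β i')) (v (α i)))).det
        * (Matrix.of (fun a : Fin (k+2) => v (α (i.succAbove a)))).det := by
    intro i
    have e1 : (Matrix.of (Fin.snoc (fun i' : Fin (k+1) => v (β i')) (v (α i)))).det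
        = N ^ (k+1) * zeta τ x (Fin.snoc β (α i)) := by
      rw [hrep (Fin.snoc β (α i))]
      congr 1
      rw [show (fun i' => v ((Fin.snoc β (α i) : Fin (k+2) → ℂ) i'))
          = v ∘ Fin.snoc β (α i) from rfl, Fin.comp_snoc]
      rfl
    have e2 : (Matrix.of (fun a : Fin (k+2) => v (α (i.succAbove a)))).det
        = N ^ (k+1) * zeta τ x (fun j : Fin (k+2) => α (i.succAbove j)) :=
      (hrep _).symm
    rw [e1, e2]
    ring
  have h4 : (N ^ (k+1) * N ^ (k+1)) * (∑ i : Fin (k+3),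
      (-1 : ℂ) ^ (i : ℕ) * zeta τ x (Fin.snoc β (α i)) *
        zeta τ x (fun j : Fin (k+2) => α (i.succAbove j))) = 0 := by
    rw [Finset.mul_sum]
    rw [Finset.sum_congr rfl (fun i _ => h2 i)]
    exact key
  rcases mul_eq_zero.mp h4 with h | h
  · exact absurd h (mul_ne_zero (pow_ne_zero _ hN) (pow_ne_zero _ hN))
  · exact h

lemma zeta_two (τ : TSeq → ℂ) (x : TSeq) (g : Fin 2 → ℂ) :
    zeta τ x g = (g 0 - g 1) * τ (x + ch (g 0) + ch (g 1)) := by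
  conv_lhs => rw [fin_cons_decomp g]
  rw [zeta_cons, zeta_cons]
  unfold zeta
  rw [Vand_nil]
  simp only [Finset.univ_eq_empty, Finset.sum_empty, add_zero, Fin.prod_univ_succ,
    Fin.prod_univ_zero, Fin.cons_zero, one_mul, mul_one]
  ring

theorem backward_thm {τ : TSeq → ℂ}
    (h : ∀ (m : ℕ), 2 ≤ m → ∀ (x : TSeq) (α : Fin (m+1) → ℂ) (β : Fin (m-1) → ℂ),
        Function.Injective α → Function.Injective β →
        (∀ i j, β i ≠ α j) → KPAdd τ m x α β) :
    ThreeTerm τ := by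
  intro x a1 a2 a3 a4
  have Tcomm : ∀ u w : ℂ, τ (x + ch u + ch w) = τ (x + ch w + ch u) := by
    intro u w; rw [add_right_comm]
  by_cases h12 : a1 = a2
  · subst h12; ring
  by_cases h13 : a1 = a3
  · subst h13; rw [Tcomm a2 a1]; ring
  by_cases h14 : a1 = a4
  · subst h14; rw [Tcomm a3 a1, Tcomm a2 a1]; ring
  by_cases h23 : a2 = a3
  · subst h23; ring
  by_cases h24 : a2 = a4
  · subst h24; rw [Tcomm a3 a2]; ring
  by_cases h34 : a3 = a4
  · subst h34; ring
  -- all distinct: use the addition formula of order 2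
  have hαinj : Function.Injective ![a2, a3, a4] := by
    intro i j hij
    fin_cases i <;> fin_cases j <;>
      simp only [Matrix.cons_val_zero, Matrix.cons_val_one, Matrix.head_cons,
        Matrix.cons_val_two, Matrix.tail_cons] at hij <;>
      first
        | rfl
        | exact absurd hij (by assumption)
        | exact absurd hij.symm (by assumption)
  have hβinj : Function.Injective (![a1] : Fin 1 → ℂ) := fun i j _ => Subsingleton.elim i j
  have hβα : ∀ i j, (![a1] : Fin 1 → ℂ) i ≠ ![a2, a3, a4] j := by
    intro i j
    fin_cases i
    fin_cases j
    · simpa using h12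
    · simpa using h13
    · simpa using h14
  have hKP := h 2 (le_refl 2) x ![a2, a3, a4] ![a1] hαinj hβinj hβα
  unfold KPAdd at hKP
  rw [Fin.sum_univ_three] at hKP
  have es : ∀ z : ℂ, (Fin.snoc ![a1] z : Fin 2 → ℂ) = ![a1, z] := by
    intro z
    funext i
    fin_cases i <;> rfl
  have e0 : (fun j : Fin 2 => ![a2, a3, a4] ((0 : Fin 3).succAbove j)) = ![a3, a4] := by
    funext j; fin_cases j <;> rfl
  have e1 : (fun j : Fin 2 => ![a2, a3, a4] ((1 : Fin 3).succAbove j)) = ![a2, a4] := by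
    funext j; fin_cases j <;> rfl
  have e2 : (fun j : Fin 2 => ![a2, a3, a4] ((2 : Fin 3).succAbove j)) = ![a2, a3] := by
    funext j; fin_cases j <;> rfl
  rw [e0, e1, e2] at hKP
  simp only [es, Matrix.cons_val_zero, Matrix.cons_val_one, Matrix.head_cons] at hKP
  rw [zeta_two, zeta_two, zeta_two, zeta_two, zeta_two, zeta_two] at hKP
  simp only [Matrix.cons_val_zero, Matrix.cons_val_one, Matrix.head_cons,
    Matrix.cons_val_two, Matrix.tail_cons,
    show ((2 : Fin 3) : ℕ) = 2 from rfl, show ((1 : Fin 3) : ℕ) = 1 from rfl,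
    show ((0 : Fin 3) : ℕ) = 0 from rfl, pow_zero, pow_one] at hKP
  linear_combination hKP

end Aux

/-- The KP hierarchy (in the form of the three-term equation) is equivalent to the
totality of its addition formulae. -/
theorem KP_threeTerm_iff_additionFormulae (τ : TSeq → ℂ) (hτ : ∀ x, τ x ≠ 0) :
    ThreeTerm τ ↔
      ∀ (m : ℕ), 2 ≤ m → ∀ (x : TSeq) (α : Fin (m+1) → ℂ) (β : Fin (m-1) → ℂ),
        Function.Injective α → Function.Injective β →
        (∀ i j, β i ≠ α j) → KPAdd τ m x α β := by
  constructor
  · intro h3 m hm x α β _ _ _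
    exact forward_thm hτ h3 m hm x α β
  · exact backward_thm

end
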